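/- The element J = Σ_{k=0}^{n-1} e_k ⊗ x^k = (1/n) Σ_{i,j=0}^{n-1} q^{-ij} x^i ⊗ x^j in K[Z_n] ⊗ K[Z_n] is a twist, i.e., it is invertible, satisfies (Δ ⊗ id)(J)(J ⊗ 1) = (id ⊗ Δ)(J)(1 ⊗ J), and (ε ⊗ id)(J) = 1 = (id ⊗ ε)(J). -/

import Mathlib

set_option linter.unusedSectionVars false

open MonoidAlgebra Finset
open scoped TensorProduct

noncomputable section

variable (K : Type*) [CommRing K] (G : Type*) [CommGroup G]

namespace GroupBialgebra

instance instCoalgebra : Coalgebra K (MonoidAlgebra K G) :=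
  inferInstanceAs (Coalgebra K (MonoidAlgebra K G))

variable {K G}

lemma comul_single (g : G) (c : K) :
    Coalgebra.comul (R := K) (MonoidAlgebra.single g c) =
      MonoidAlgebra.single g (1 : K) ⊗ₜ[K] MonoidAlgebra.single g c := by
  have h := MonoidAlgebra.comul_single (R := K) g c
  simp only [CommSemiring.comul_apply, TensorProduct.map_tmul, MonoidAlgebra.lsingle_apply] at h
  exact h

lemma counit_single (g : G) (c : K) :
    Coalgebra.counit (R := K) (MonoidAlgebra.single g c) = c := by
  have h := MonoidAlgebra.counit_single (R := K) g c
  simp only [CommSemiring.counit_apply] at h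
  exact h

variable (K G)

instance instBialgebra : Bialgebra K (MonoidAlgebra K G) :=
  Bialgebra.mk' K (MonoidAlgebra K G)
    (by simpa [MonoidAlgebra.one_def] using counit_single (1 : G) (1 : K))
    (fun {a b} => by
      induction a using MonoidAlgebra.induction_linear with
      | zero => simp
      | add f h hf hh => simp [add_mul, hf, hh]
      | single g c =>
        induction b using MonoidAlgebra.induction_linear with
        | zero => simp
        | add f h hf hh => simp [mul_add, hf, hh]
        | single h d =>
          simp only [MonoidAlgebra.single_mul_single, counit_single])
    (by simpa [MonoidAlgebra.one_def, Algebra.TensorProduct.one_def] using comul_single (1 : G) (1 : K))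
    (fun {a b} => by
      induction a using MonoidAlgebra.induction_linear with
      | zero => simp
      | add f h hf hh => simp [add_mul, hf, hh]
      | single g c =>
        induction b using MonoidAlgebra.induction_linear with
        | zero => simp
        | add f h hf hh => simp [mul_add, hf, hh]
        | single h d =>
          simp only [MonoidAlgebra.single_mul_single, comul_single,
            Algebra.TensorProduct.tmul_mul_tmul, one_mul])

end GroupBialgebra

end

noncomputable section

/-- The group algebra `K[Z_n]` of the cyclic group of order `n`. -/
abbrev GroupAlgZn (K : Type*) [CommRing K] (n : ℕ) : Type _ :=
  MonoidAlgebra K (Multiplicative (ZMod n))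

/-- The canonical generator `x` of the group algebra `K[Z_n]`. -/
def xgen (K : Type*) [CommRing K] (n : ℕ) : GroupAlgZn K n :=
  MonoidAlgebra.of K (Multiplicative (ZMod n)) (Multiplicative.ofAdd (1 : ZMod n))

/-- The idempotent `e_k = (1/n) ∑_{i=0}^{n-1} q^{-ik} x^i` in `K[Z_n]`. -/
def eIdem (K : Type*) [Field K] (n : ℕ) (q : K) (k : ZMod n) : GroupAlgZn K n :=
  (n : K)⁻¹ • ∑ i ∈ Finset.range n, (q ^ (i * k.val))⁻¹ • (xgen K n) ^ i

/-- `J ∈ R ⊗ R` is a twist for the bialgebra `R`: it is invertible, satisfies the twist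
(2-cocycle) equation `(Δ ⊗ id)(J)(J ⊗ 1) = (id ⊗ Δ)(J)(1 ⊗ J)`, and
`(ε ⊗ id)(J) = 1 = (id ⊗ ε)(J)`. -/
def IsTwist (K : Type*) [CommRing K] (R : Type*) [Ring R] [Bialgebra K R]
    (J : R ⊗[K] R) : Prop :=
  IsUnit J ∧
  (TensorProduct.assoc K R R R)
      ((LinearMap.rTensor R (Coalgebra.comul (R := K))) J * (J ⊗ₜ[K] (1 : R))) =
    (LinearMap.lTensor R (Coalgebra.comul (R := K))) J * ((1 : R) ⊗ₜ[K] J) ∧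
  (TensorProduct.lid K R) ((LinearMap.rTensor R (Coalgebra.counit (R := K))) J) = 1 ∧
  (TensorProduct.rid K R) ((LinearMap.lTensor R (Coalgebra.counit (R := K))) J) = 1

section TwistAux

open MonoidAlgebra Finset
open scoped TensorProduct

namespace TwistAux

variable {K : Type*} [Field K] {n : ℕ}

/-- The group-like basis element `x^g` of `K[Z_n]`, indexed by `g : ZMod n`. -/
noncomputable def Xg (K : Type*) [Field K] (n : ℕ) (g : ZMod n) : GroupAlgZn K n :=
  MonoidAlgebra.single (Multiplicative.ofAdd g) 1

lemma Xg_mul (g h : ZMod n) : Xg K n g * Xg K n h = Xg K n (g + h) := by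
  simp [Xg, MonoidAlgebra.single_mul_single, ← ofAdd_add]

lemma Xg_zero : Xg K n 0 = 1 := by
  simp [Xg, MonoidAlgebra.one_def]

lemma xgen_pow (i : ℕ) : (xgen K n) ^ i = Xg K n (i : ZMod n) := by
  induction i with
  | zero => simpa using (Xg_zero (K := K) (n := n)).symm
  | succ i ih =>
      have hx : xgen K n = Xg K n 1 := rfl
      rw [pow_succ, ih, hx, Xg_mul]
      push_cast
      ring_nf

lemma comul_Xg (g : ZMod n) :
    Coalgebra.comul (R := K) (Xg K n g) = Xg K n g ⊗ₜ[K] Xg K n g :=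
  GroupBialgebra.comul_single _ _

lemma counit_Xg (g : ZMod n) :
    Coalgebra.counit (R := K) (Xg K n g) = 1 :=
  GroupBialgebra.counit_single _ _

/-- The character `z ↦ q^z` of `ZMod n`. -/
noncomputable def chi (q : K) {n : ℕ} (z : ZMod n) : K := q ^ z.val

section chi

variable {q : K} [NeZero n]

lemma chi_natCast (hq1 : q ^ n = 1) (m : ℕ) : chi q (m : ZMod n) = q ^ m := by
  rw [chi, ZMod.val_natCast]
  conv_rhs => rw [← Nat.mod_add_div m n]
  rw [pow_add, pow_mul, hq1, one_pow, mul_one]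

lemma chi_zero : chi q (0 : ZMod n) = 1 := by simp [chi]

lemma chi_add (hq1 : q ^ n = 1) (a b : ZMod n) : chi q (a + b) = chi q a * chi q b := by
  have h1 : ((a.val + b.val : ℕ) : ZMod n) = a + b := by
    push_cast [ZMod.natCast_val, ZMod.cast_id]
    ring
  calc chi q (a + b) = chi q ((a.val + b.val : ℕ) : ZMod n) := by rw [h1]
    _ = q ^ (a.val + b.val) := chi_natCast hq1 _
    _ = chi q a * chi q b := by rw [pow_add]; rfl

lemma chi_inv (hq1 : q ^ n = 1) (z : ZMod n) : (chi q z)⁻¹ = chi q (-z) := by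
  have h : chi q z * chi q (-z) = 1 := by
    rw [← chi_add hq1, add_neg_cancel, chi_zero]
  exact inv_eq_of_mul_eq_one_right h

lemma sum_univ_zmod {M : Type*} [AddCommMonoid M] (f : ZMod n → M) :
    ∑ i ∈ Finset.range n, f (i : ZMod n) = ∑ g : ZMod n, f g := by
  refine Finset.sum_nbij' (fun i => ((i : ℕ) : ZMod n)) (fun g => g.val) ?_ ?_ ?_ ?_ ?_
  · intro a _; exact Finset.mem_univ _
  · intro g _; exact Finset.mem_range.mpr (ZMod.val_lt g)
  · intro a ha; exact ZMod.val_cast_of_lt (Finset.mem_range.mp ha)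
  · intro g _; exact ZMod.natCast_rightInverse g
  · intro a _; rfl

lemma gauss (hq : IsPrimitiveRoot q n) (t : ZMod n) :
    ∑ g : ZMod n, chi q (g * t) = if t = 0 then (n : K) else 0 := by
  have hq1 : q ^ n = 1 := hq.pow_eq_one
  split_ifs with ht
  · subst ht
    simp [chi_zero, ZMod.card, Finset.card_univ]
  · rw [← sum_univ_zmod]
    have key : ∀ i : ℕ, chi q ((i : ZMod n) * t) = (q ^ t.val) ^ i := by
      intro i
      have h2 : ((i : ZMod n) * t) = ((i * t.val : ℕ) : ZMod n) := by
        push_cast [ZMod.natCast_val, ZMod.cast_id]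
        ring
      rw [h2, chi_natCast hq1, mul_comm, pow_mul]
    simp_rw [key]
    have h1 : q ^ t.val ≠ 1 := by
      intro h
      have hd : n ∣ t.val := (hq.pow_eq_one_iff_dvd t.val).mp h
      have hv : t.val = 0 := Nat.eq_zero_of_dvd_of_lt hd (ZMod.val_lt t)
      exact ht ((ZMod.val_eq_zero t).mp hv)
    have h2 : (q ^ t.val) ^ n = 1 := by
      rw [← pow_mul, mul_comm, pow_mul, hq1, one_pow]
    have h3 := geom_sum_mul (q ^ t.val) n
    rw [h2, sub_self] at h3
    rcases mul_eq_zero.mp h3 with h | h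
    · exact h
    · exact absurd (sub_eq_zero.mp h) h1

end chi

end TwistAux

end TwistAux
section EidSection

open MonoidAlgebra Finset
open scoped TensorProduct

namespace TwistAux

variable {K : Type*} [Field K] {n : ℕ} [NeZero n] {q : K}

/-- The idempotent `e_k`, written with `ZMod n` indexing. -/
noncomputable def Eid (K : Type*) [Field K] (n : ℕ) [NeZero n] (q : K) (k : ZMod n) : GroupAlgZn K n :=
  (n : K)⁻¹ • ∑ g : ZMod n, chi q (-(g * k)) • Xg K n g

lemma Eid_apply (k : ZMod n) :
    Eid K n q k = ∑ g : ZMod n, ((n : K)⁻¹ * chi q (-(g * k))) • Xg K n g := by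
  rw [Eid, Finset.smul_sum]
  simp_rw [smul_smul]

lemma eIdem_eq (hq1 : q ^ n = 1) (k : ZMod n) : eIdem K n q k = Eid K n q k := by
  rw [eIdem, Eid]
  congr 1
  rw [← sum_univ_zmod (fun g => chi q (-(g * k)) • Xg K n g)]
  refine Finset.sum_congr rfl fun i _ => ?_
  rw [xgen_pow]
  congr 1
  rw [← chi_inv hq1 ((i : ZMod n) * k)]
  congr 1
  rw [← chi_natCast hq1 (i * k.val)]
  congr 1
  push_cast [ZMod.natCast_val, ZMod.cast_id]
  ring

/-- key Gauss-sum evaluation -/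
lemma sum_coef (hq : IsPrimitiveRoot q n) (hn0 : (n : K) ≠ 0) (k : ZMod n) :
    ∑ g : ZMod n, (n : K)⁻¹ * chi q (-(g * k)) = if k = 0 then 1 else 0 := by
  rw [← Finset.mul_sum]
  simp only [show ∀ g : ZMod n, -(g * k) = g * (-k) from fun g => by ring]
  rw [gauss hq (-k)]
  simp only [neg_eq_zero]
  split_ifs with h
  · exact inv_mul_cancel₀ hn0
  · exact mul_zero _

lemma Eid_sum (hq : IsPrimitiveRoot q n) (hn0 : (n : K) ≠ 0) :
    ∑ g : ZMod n, Eid K n q g = 1 := by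
  simp_rw [Eid_apply]
  rw [Finset.sum_comm]
  simp_rw [← Finset.sum_smul]
  have key : ∀ h : ZMod n,
      (∑ g : ZMod n, (n : K)⁻¹ * chi q (-(h * g))) = if h = 0 then 1 else 0 := by
    intro h
    simp only [show ∀ g : ZMod n, -(h * g) = -(g * h) from fun g => by ring]
    exact sum_coef hq hn0 h
  simp_rw [key, ite_smul, zero_smul]
  rw [Finset.sum_ite_eq' Finset.univ (0 : ZMod n) (fun h => (1 : K) • Xg K n h)]
  simp [Xg_zero]

lemma Xg_mul_Eid (hq1 : q ^ n = 1) (m k : ZMod n) :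
    Xg K n m * Eid K n q k = chi q (m * k) • Eid K n q k := by
  rw [Eid_apply, Finset.mul_sum, Finset.smul_sum]
  simp_rw [mul_smul_comm, Xg_mul, smul_smul]
  refine Fintype.sum_equiv (Equiv.addLeft m) _ _ fun x => ?_
  simp only [Equiv.coe_addLeft]
  have h : chi q (m * k) * chi q (-(m * k)) = 1 := by
    rw [← chi_add hq1, add_neg_cancel, chi_zero]
  rw [show -((m + x) * k) = -(m * k) + -(x * k) by ring, chi_add hq1]
  have heq : (n : K)⁻¹ * chi q (-(x * k)) =
      chi q (m * k) * ((n : K)⁻¹ * (chi q (-(m * k)) * chi q (-(x * k)))) := by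
    linear_combination (-((n : K)⁻¹ * chi q (-(x * k)))) * h
  rw [heq]

lemma Eid_mul (hq : IsPrimitiveRoot q n) (hn0 : (n : K) ≠ 0) (a b : ZMod n) :
    Eid K n q a * Eid K n q b = if a = b then Eid K n q a else 0 := by
  have hq1 := hq.pow_eq_one
  rw [Eid_apply, Eid_apply, Finset.sum_mul_sum]
  simp_rw [smul_mul_smul_comm, Xg_mul]
  have step : ∀ g : ZMod n,
      (∑ h : ZMod n, (((n : K)⁻¹ * chi q (-(g * a))) * ((n : K)⁻¹ * chi q (-(h * b)))) •
        Xg K n (g + h))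
      = ∑ s : ZMod n, (((n : K)⁻¹ * chi q (-(g * a))) * ((n : K)⁻¹ * chi q (-((s - g) * b)))) •
        Xg K n s := by
    intro g
    refine Fintype.sum_equiv (Equiv.addLeft g) _ _ fun h => ?_
    simp only [Equiv.coe_addLeft, add_sub_cancel_left]
  simp_rw [step]
  rw [Finset.sum_comm]
  simp_rw [← Finset.sum_smul]
  have key : ∀ s : ZMod n,
      (∑ g : ZMod n, ((n : K)⁻¹ * chi q (-(g * a))) * ((n : K)⁻¹ * chi q (-((s - g) * b))))
      = if a = b then (n : K)⁻¹ * chi q (-(s * a)) else 0 := by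
    intro s
    have expand : ∀ g : ZMod n,
        ((n : K)⁻¹ * chi q (-(g * a))) * ((n : K)⁻¹ * chi q (-((s - g) * b)))
        = ((n : K)⁻¹ * (n : K)⁻¹ * chi q (-(s * b))) * chi q (g * (b - a)) := by
      intro g
      rw [show (-(g * a)) = (g * (b - a)) + -(g * b) by ring,
        show (-((s - g) * b)) = -(s * b) + (g * b) by ring,
        chi_add hq1, chi_add hq1]
      have h2 : chi q (-(g * b)) * chi q (g * b) = 1 := by
        rw [← chi_add hq1, neg_add_cancel, chi_zero]
      linear_combination ((n : K)⁻¹ * (n : K)⁻¹ * chi q (g * (b - a)) * chi q (-(s * b))) * h2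
    simp_rw [expand]
    rw [← Finset.mul_sum, gauss hq (b - a)]
    simp only [sub_eq_zero]
    by_cases hab : a = b
    · subst hab
      simp only [if_pos rfl, if_true]
      field_simp
    · rw [if_neg (fun h => hab h.symm), if_neg hab, mul_zero]
  simp_rw [key]
  by_cases hab : a = b
  · subst hab
    simp
  · simp [hab]

lemma counit_Eid (hq : IsPrimitiveRoot q n) (hn0 : (n : K) ≠ 0) (k : ZMod n) :
    Coalgebra.counit (R := K) (Eid K n q k) = if k = 0 then 1 else 0 := by
  rw [Eid_apply, map_sum]
  simp_rw [map_smul, counit_Xg, smul_eq_mul, mul_one]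
  exact sum_coef hq hn0 k

lemma comul_Eid (hq : IsPrimitiveRoot q n) (hn0 : (n : K) ≠ 0) (k : ZMod n) :
    Coalgebra.comul (R := K) (Eid K n q k)
      = ∑ a : ZMod n, Eid K n q a ⊗ₜ[K] Eid K n q (k - a) := by
  have hq1 := hq.pow_eq_one
  symm
  simp_rw [Eid_apply]
  simp only [TensorProduct.sum_tmul, TensorProduct.tmul_sum,
    ← TensorProduct.smul_tmul', TensorProduct.tmul_smul, Finset.smul_sum, smul_smul]
  rw [Finset.sum_comm]
  rw [map_sum]
  refine Finset.sum_congr rfl fun g _ => ?_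
  rw [Finset.sum_comm]
  simp_rw [← Finset.sum_smul]
  have key : ∀ h : ZMod n,
      (∑ x : ZMod n, ((n : K)⁻¹ * chi q (-(g * (k - x)))) * ((n : K)⁻¹ * chi q (-(h * x))))
      = if h = g then (n : K)⁻¹ * chi q (-(g * k)) else 0 := by
    intro h
    have expand : ∀ x : ZMod n,
        ((n : K)⁻¹ * chi q (-(g * (k - x)))) * ((n : K)⁻¹ * chi q (-(h * x)))
        = ((n : K)⁻¹ * (n : K)⁻¹ * chi q (-(g * k))) * chi q (x * (g - h)) := by
      intro x
      rw [show (-(g * (k - x))) = (x * (g - h)) + (-(g * k) + x * h) by ring,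
        show (-(h * x)) = -(x * h) by ring,
        chi_add hq1, chi_add hq1]
      have h2 : chi q (x * h) * chi q (-(x * h)) = 1 := by
        rw [← chi_add hq1, add_neg_cancel, chi_zero]
      linear_combination ((n : K)⁻¹ * (n : K)⁻¹ * chi q (x * (g - h)) * chi q (-(g * k))) * h2
    simp_rw [expand]
    rw [← Finset.mul_sum, gauss hq (g - h)]
    simp only [sub_eq_zero]
    by_cases hg : h = g
    · subst hg
      simp only [if_pos rfl, if_true]
      field_simp
    · rw [if_neg (fun hh => hg hh.symm), if_neg hg, mul_zero]
  simp_rw [key, ite_smul, zero_smul]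
  rw [Finset.sum_ite_eq' Finset.univ g
    (fun h => ((n : K)⁻¹ * chi q (-(g * k))) • (Xg K n h ⊗ₜ[K] Xg K n g))]
  simp only [Finset.mem_univ, if_true]
  rw [map_smul, comul_Xg]

end TwistAux

end EidSection
section TwistMain

open MonoidAlgebra Finset
open scoped TensorProduct

namespace TwistAux

variable {K : Type*} [Field K] {n : ℕ} [NeZero n] {q : K}

/-- abbreviation for the twist element in `ZMod`-indexed form -/
noncomputable def Jz (K : Type*) [Field K] (n : ℕ) [NeZero n] (q : K) :
    GroupAlgZn K n ⊗[K] GroupAlgZn K n :=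
  ∑ g : ZMod n, Eid K n q g ⊗ₜ[K] Xg K n g

lemma J_eq_Jz (hq1 : q ^ n = 1) :
    (∑ k ∈ Finset.range n, eIdem K n q ((k : ℕ) : ZMod n) ⊗ₜ[K] ((xgen K n) ^ k))
      = Jz K n q := by
  rw [Jz, ← sum_univ_zmod (fun g => Eid K n q g ⊗ₜ[K] Xg K n g)]
  refine Finset.sum_congr rfl fun k _ => ?_
  rw [eIdem_eq hq1, xgen_pow]

lemma Jz_eq_double (hq1 : q ^ n = 1) :
    Jz K n q = (n : K)⁻¹ • ∑ i ∈ Finset.range n, ∑ j ∈ Finset.range n,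
        (q ^ (i * j))⁻¹ • (((xgen K n) ^ i) ⊗ₜ[K] ((xgen K n) ^ j)) := by
  have hstep : ∀ i j : ℕ, (q ^ (i * j))⁻¹ • (((xgen K n) ^ i) ⊗ₜ[K] ((xgen K n) ^ j))
      = chi q (-((i : ZMod n) * (j : ZMod n))) •
          (Xg K n (i : ZMod n) ⊗ₜ[K] Xg K n (j : ZMod n)) := by
    intro i j
    rw [xgen_pow, xgen_pow]
    congr 1
    rw [← chi_inv hq1 ((i : ZMod n) * (j : ZMod n)), ← chi_natCast hq1 (i * j)]
    congr 1
    push_cast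
    ring
  simp_rw [hstep]
  have h2 : ∀ g : ZMod n, (∑ j ∈ Finset.range n,
      chi q (-(g * (j : ZMod n))) • (Xg K n g ⊗ₜ[K] Xg K n (j : ZMod n)))
      = ∑ h : ZMod n, chi q (-(g * h)) • (Xg K n g ⊗ₜ[K] Xg K n h) := fun g =>
    sum_univ_zmod (fun h => chi q (-(g * h)) • (Xg K n g ⊗ₜ[K] Xg K n h))
  rw [sum_univ_zmod (fun g => ∑ j ∈ Finset.range n,
      chi q (-(g * (j : ZMod n))) • (Xg K n g ⊗ₜ[K] Xg K n (j : ZMod n)))]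
  simp_rw [h2]
  rw [Jz]
  simp_rw [Eid_apply, TensorProduct.sum_tmul, ← TensorProduct.smul_tmul']
  rw [Finset.sum_comm, Finset.smul_sum]
  refine Finset.sum_congr rfl fun g _ => ?_
  rw [Finset.smul_sum]
  refine Finset.sum_congr rfl fun h _ => ?_
  rw [smul_smul]

lemma Jz_counit_left (hq : IsPrimitiveRoot q n) (hn0 : (n : K) ≠ 0) :
    (TensorProduct.lid K (GroupAlgZn K n))
      ((LinearMap.rTensor (GroupAlgZn K n) (Coalgebra.counit (R := K))) (Jz K n q)) = 1 := by
  rw [Jz, map_sum, map_sum]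
  simp_rw [LinearMap.rTensor_tmul, counit_Eid hq hn0, TensorProduct.lid_tmul,
    ite_smul, one_smul, zero_smul]
  rw [Finset.sum_ite_eq' Finset.univ (0 : ZMod n) (fun g => Xg K n g)]
  simp [Xg_zero]

lemma Jz_counit_right (hq : IsPrimitiveRoot q n) (hn0 : (n : K) ≠ 0) :
    (TensorProduct.rid K (GroupAlgZn K n))
      ((LinearMap.lTensor (GroupAlgZn K n) (Coalgebra.counit (R := K))) (Jz K n q)) = 1 := by
  rw [Jz, map_sum, map_sum]
  simp_rw [LinearMap.lTensor_tmul, counit_Xg, TensorProduct.rid_tmul, one_smul]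
  exact Eid_sum hq hn0

lemma Jz_mul_inv (hq : IsPrimitiveRoot q n) (hn0 : (n : K) ≠ 0) :
    Jz K n q * (∑ g : ZMod n, Eid K n q g ⊗ₜ[K] Xg K n (-g)) = 1 := by
  rw [Jz, Finset.sum_mul_sum]
  simp_rw [Algebra.TensorProduct.tmul_mul_tmul, Eid_mul hq hn0, Xg_mul,
    TensorProduct.ite_tmul]
  simp only [Finset.sum_ite_eq, Finset.mem_univ, if_true]
  simp_rw [add_neg_cancel]
  rw [← TensorProduct.sum_tmul, Eid_sum hq hn0, Xg_zero]
  rfl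

lemma Jz_isUnit (hq : IsPrimitiveRoot q n) (hn0 : (n : K) ≠ 0) :
    IsUnit (Jz K n q) :=
  IsUnit.of_mul_eq_one _ (Jz_mul_inv hq hn0)

set_option maxHeartbeats 1000000 in
set_option synthInstance.maxHeartbeats 400000 in
lemma Jz_cocycle (hq : IsPrimitiveRoot q n) (hn0 : (n : K) ≠ 0) :
    (TensorProduct.assoc K (GroupAlgZn K n) (GroupAlgZn K n) (GroupAlgZn K n))
      ((LinearMap.rTensor (GroupAlgZn K n) (Coalgebra.comul (R := K))) (Jz K n q)
        * ((Jz K n q) ⊗ₜ[K] (1 : GroupAlgZn K n))) =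
    (LinearMap.lTensor (GroupAlgZn K n) (Coalgebra.comul (R := K))) (Jz K n q)
      * ((1 : GroupAlgZn K n) ⊗ₜ[K] (Jz K n q)) := by
  have hL1 : (LinearMap.rTensor (GroupAlgZn K n) (Coalgebra.comul (R := K))) (Jz K n q)
      = ∑ g : ZMod n, ∑ a : ZMod n,
          (Eid K n q a ⊗ₜ[K] Eid K n q (g - a)) ⊗ₜ[K] Xg K n g := by
    rw [Jz, map_sum]
    refine Finset.sum_congr rfl fun g _ => ?_
    rw [LinearMap.rTensor_tmul, comul_Eid hq hn0, TensorProduct.sum_tmul]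
  have hR1 : (LinearMap.lTensor (GroupAlgZn K n) (Coalgebra.comul (R := K))) (Jz K n q)
      = ∑ g : ZMod n, Eid K n q g ⊗ₜ[K] (Xg K n g ⊗ₜ[K] Xg K n g) := by
    rw [Jz, map_sum]
    refine Finset.sum_congr rfl fun g _ => ?_
    rw [LinearMap.lTensor_tmul, comul_Xg]
  rw [hL1, hR1, Jz]
  rw [TensorProduct.sum_tmul, TensorProduct.tmul_sum]
  have hsum_mul : ∀ (F : ZMod n → (GroupAlgZn K n ⊗[K] GroupAlgZn K n) ⊗[K] GroupAlgZn K n)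
      (x : (GroupAlgZn K n ⊗[K] GroupAlgZn K n) ⊗[K] GroupAlgZn K n),
      (∑ i : ZMod n, F i) * x = ∑ i : ZMod n, F i * x := fun F x => Finset.sum_mul Finset.univ F x
  have hmul_sum : ∀ (F : ZMod n → (GroupAlgZn K n ⊗[K] GroupAlgZn K n) ⊗[K] GroupAlgZn K n)
      (x : (GroupAlgZn K n ⊗[K] GroupAlgZn K n) ⊗[K] GroupAlgZn K n),
      x * (∑ i : ZMod n, F i) = ∑ i : ZMod n, x * F i := fun F x => Finset.mul_sum Finset.univ F x
  have hsum_mul2 : ∀ (F : ZMod n → GroupAlgZn K n ⊗[K] (GroupAlgZn K n ⊗[K] GroupAlgZn K n))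
      (x : GroupAlgZn K n ⊗[K] (GroupAlgZn K n ⊗[K] GroupAlgZn K n)),
      (∑ i : ZMod n, F i) * x = ∑ i : ZMod n, F i * x := fun F x => Finset.sum_mul Finset.univ F x
  have hmul_sum2 : ∀ (F : ZMod n → GroupAlgZn K n ⊗[K] (GroupAlgZn K n ⊗[K] GroupAlgZn K n))
      (x : GroupAlgZn K n ⊗[K] (GroupAlgZn K n ⊗[K] GroupAlgZn K n)),
      x * (∑ i : ZMod n, F i) = ∑ i : ZMod n, x * F i := fun F x => Finset.mul_sum Finset.univ F x
  simp only [hsum_mul, hmul_sum, hsum_mul2, hmul_sum2]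
  simp only [Algebra.TensorProduct.tmul_mul_tmul, mul_one, one_mul,
    Eid_mul hq hn0, TensorProduct.ite_tmul, Xg_mul]
  simp only [Finset.sum_ite_eq, Finset.mem_univ, if_true]
  rw [map_sum]
  have hassoc : ∀ g : ZMod n,
      (TensorProduct.assoc K (GroupAlgZn K n) (GroupAlgZn K n) (GroupAlgZn K n))
        (∑ a : ZMod n, (Eid K n q a ⊗ₜ[K] (Eid K n q (g - a) * Xg K n a)) ⊗ₜ[K] Xg K n g)
      = ∑ a : ZMod n, Eid K n q a ⊗ₜ[K] ((Eid K n q (g - a) * Xg K n a) ⊗ₜ[K] Xg K n g) := by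
    intro g
    rw [map_sum]
    exact Finset.sum_congr rfl fun a _ => TensorProduct.assoc_tmul _ _ _
  simp_rw [hassoc]
  rw [Finset.sum_comm]
  refine Finset.sum_congr rfl fun a _ => ?_
  refine Fintype.sum_equiv (Equiv.subRight a) _ _ fun g => ?_
  simp only [Equiv.subRight_apply]
  rw [show a + (g - a) = g by ring, mul_comm]

end TwistAux

end TwistMain

/-- `J = ∑_k e_k ⊗ x^k = (1/n) ∑_{i,j} q^{-ij} x^i ⊗ x^j` is a twist for `K[Z_n]`. -/
theorem J_isTwist (K : Type*) [Field K] [CharZero K] (n : ℕ) (hn : 2 ≤ n)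
    (q : K) (hq : IsPrimitiveRoot q n) :
    let J : GroupAlgZn K n ⊗[K] GroupAlgZn K n :=
      ∑ k ∈ Finset.range n, eIdem K n q ((k : ℕ) : ZMod n) ⊗ₜ[K] ((xgen K n) ^ k)
    J = (n : K)⁻¹ • ∑ i ∈ Finset.range n, ∑ j ∈ Finset.range n,
          (q ^ (i * j))⁻¹ • (((xgen K n) ^ i) ⊗ₜ[K] ((xgen K n) ^ j)) ∧
    IsTwist K (GroupAlgZn K n) J := by
  haveI : NeZero n := ⟨by omega⟩
  have hn0 : (n : K) ≠ 0 := Nat.cast_ne_zero.mpr (by omega)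
  have hq1 : q ^ n = 1 := hq.pow_eq_one
  intro J
  have hJ : J = TwistAux.Jz K n q := TwistAux.J_eq_Jz hq1
  constructor
  · rw [hJ, TwistAux.Jz_eq_double hq1]
  · refine ⟨?_, ?_, ?_, ?_⟩
    · rw [hJ]; exact TwistAux.Jz_isUnit hq hn0
    · rw [hJ]; exact TwistAux.Jz_cocycle hq hn0
    · rw [hJ]; exact TwistAux.Jz_counit_left hq hn0
    · rw [hJ]; exact TwistAux.Jz_counit_right hq hn0
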